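/- Under the hypotheses of the previous statement, the optimal value of the weighted proximal dual problem equals F_μ(V*,h*,x') := L_μ(V*,h*,x') − (1/(2μ)) Σ_{s,a} w(s,a) x'(s,a)², where L_μ is the weighted augmented Lagrangian. -/

import Mathlib

/-- The Z-function `Z_μ(V,h,x',s,a)`. -/
def Zmu {S A : Type*} [Fintype S]
    (P : S → A → S → ℝ) (r : S → A → ℝ) (γ μ : ℝ)
    (V : S → ℝ) (h x' : S → A → ℝ) (s : S) (a : A) : ℝ :=
  x' s a + μ * (h s a + r s a + γ * (∑ s', P s a s' * V s') - V s)

/-- The weighted augmented Lagrangian `L_μ(V,h,x')`. -/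
noncomputable def Lmu {S A : Type*} [Fintype S] [Fintype A]
    (P : S → A → S → ℝ) (r : S → A → ℝ) (ρ₀ : S → ℝ) (γ μ : ℝ)
    (w : S → A → ℝ) (V : S → ℝ) (h x' : S → A → ℝ) : ℝ :=
  (∑ s, ρ₀ s * V s) +
    (1 / (2 * μ)) * ∑ s, ∑ a, w s a * (Zmu P r γ μ V h x' s a) ^ 2

lemma quad_all (D C : ℝ) (hC : 0 ≤ C) (h : ∀ t : ℝ, 0 ≤ D * t + C * t ^ 2) : D = 0 := by
  by_contra hD
  have h2 : (0:ℝ) < 2 * C + 1 := by linarith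
  set u := D / (2 * C + 1) with hu
  have hu1 : u * (2 * C + 1) = D := div_mul_cancel₀ _ (by linarith)
  have hu0 : u ≠ 0 := by
    intro h0; apply hD; rw [← hu1, h0, zero_mul]
  have hu2 : 0 < u ^ 2 := by positivity
  have h1 := h (-u)
  rw [← hu1] at h1
  nlinarith [hu2]

lemma quad_pos (D C : ℝ) (hC : 0 ≤ C) (h : ∀ t : ℝ, 0 ≤ t → 0 ≤ D * t + C * t ^ 2) : 0 ≤ D := by
  by_contra hD
  push_neg at hD
  have h2 : (0:ℝ) < 2 * C + 1 := by linarith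
  set u := -D / (2 * C + 1) with hu
  have hu1 : u * (2 * C + 1) = -D := div_mul_cancel₀ _ (by linarith)
  have hu0 : 0 < u := div_pos (by linarith) h2
  have hu2 : 0 < u ^ 2 := by positivity
  have h1 := h u (le_of_lt hu0)
  have hD' : D = -(u * (2 * C + 1)) := by linarith
  rw [hD'] at h1
  nlinarith [hu2]

lemma quad_neg (D C : ℝ) (hC : 0 ≤ C) (h : ∀ t : ℝ, -1 ≤ t → 0 ≤ D * t + C * t ^ 2) : D ≤ 0 := by
  by_contra hD
  push_neg at hD
  have h2 : (0:ℝ) < 2 * C + 1 := by linarith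
  have hu1 : (D / (2 * C + 1)) * (2 * C + 1) = D := div_mul_cancel₀ _ (by linarith)
  set m := min 1 (D / (2 * C + 1)) with hm
  have hm2 : 0 < m := lt_min one_pos (div_pos hD h2)
  have hm1 : m * (2 * C + 1) ≤ D := by
    calc m * (2 * C + 1) ≤ (D / (2 * C + 1)) * (2 * C + 1) :=
          mul_le_mul_of_nonneg_right (min_le_right _ _) (le_of_lt h2)
      _ = D := hu1
  have h1 := h (-m) (by have := min_le_left 1 (D / (2 * C + 1)); simp only [hm]; linarith)
  nlinarith [mul_pos hm2 hm2, mul_pos hD hm2]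

lemma L_expand {S A : Type*} [Fintype S] [Fintype A]
    (P : S → A → S → ℝ) (r : S → A → ℝ) (ρ₀ : S → ℝ) (γ μ : ℝ) (hμ : μ ≠ 0)
    (w : S → A → ℝ) (V : S → ℝ) (h x' : S → A → ℝ) (t : ℝ)
    (dV : S → ℝ) (dh : S → A → ℝ) :
    Lmu P r ρ₀ γ μ w (fun s => V s + t * dV s) (fun s a => h s a + t * dh s a) x'
      = Lmu P r ρ₀ γ μ w V h x'
        + t * ((∑ s, ρ₀ s * dV s) + ∑ s, ∑ a, w s a * Zmu P r γ μ V h x' s a *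
            (dh s a + γ * (∑ s1, P s a s1 * dV s1) - dV s))
        + t ^ 2 * ((μ / 2) * ∑ s, ∑ a, w s a *
            (dh s a + γ * (∑ s1, P s a s1 * dV s1) - dV s) ^ 2) := by
  have hZ : ∀ s a, Zmu P r γ μ (fun s => V s + t * dV s) (fun s a => h s a + t * dh s a) x' s a
      = Zmu P r γ μ V h x' s a + μ * t * (dh s a + γ * (∑ s1, P s a s1 * dV s1) - dV s) := by
    intro s a
    have hs : ∑ s1, P s a s1 * (V s1 + t * dV s1)
        = (∑ s1, P s a s1 * V s1) + t * (∑ s1, P s a s1 * dV s1) := by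
      rw [Finset.mul_sum, ← Finset.sum_add_distrib]
      exact Finset.sum_congr rfl fun s1 _ => by ring
    simp only [Zmu, hs]; ring
  simp only [Lmu, hZ]
  have hρ : ∑ s, ρ₀ s * (V s + t * dV s) = (∑ s, ρ₀ s * V s) + t * (∑ s, ρ₀ s * dV s) := by
    rw [Finset.mul_sum, ← Finset.sum_add_distrib]
    exact Finset.sum_congr rfl fun s _ => by ring
  have hsq : ∑ s, ∑ a, w s a * (Zmu P r γ μ V h x' s a
        + μ * t * (dh s a + γ * (∑ s1, P s a s1 * dV s1) - dV s)) ^ 2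
      = (∑ s, ∑ a, w s a * (Zmu P r γ μ V h x' s a) ^ 2)
        + (2 * μ * t) * (∑ s, ∑ a, w s a * Zmu P r γ μ V h x' s a *
            (dh s a + γ * (∑ s1, P s a s1 * dV s1) - dV s))
        + (μ ^ 2 * t ^ 2) * (∑ s, ∑ a, w s a *
            (dh s a + γ * (∑ s1, P s a s1 * dV s1) - dV s) ^ 2) := by
    calc ∑ s, ∑ a, w s a * (Zmu P r γ μ V h x' s a
          + μ * t * (dh s a + γ * (∑ s1, P s a s1 * dV s1) - dV s)) ^ 2
        = ∑ s, ∑ a, (w s a * (Zmu P r γ μ V h x' s a) ^ 2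
            + (2 * μ * t) * (w s a * Zmu P r γ μ V h x' s a *
                (dh s a + γ * (∑ s1, P s a s1 * dV s1) - dV s))
            + (μ ^ 2 * t ^ 2) * (w s a *
                (dh s a + γ * (∑ s1, P s a s1 * dV s1) - dV s) ^ 2)) :=
          Finset.sum_congr rfl fun s _ => Finset.sum_congr rfl fun a _ => by ring
      _ = _ := by simp only [Finset.sum_add_distrib, ← Finset.mul_sum]
  rw [hρ, hsq]
  field_simp
  ring

/-- The optimal value of the weighted proximal dual problem equals
`F_μ(V*,h*,x') = L_μ(V*,h*,x') - (1/(2μ)) Σ w x'²`. -/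
theorem prox_dual_optimal_value_eq_Fmu
    {S A : Type*} [Fintype S] [Fintype A] [DecidableEq S]
    (P : S → A → S → ℝ) (hP : ∀ s a, ∑ s', P s a s' = 1)
    (r : S → A → ℝ)
    (ρ₀ : S → ℝ) (hρ₀ : ∀ s, 0 ≤ ρ₀ s) (hρsum : ∑ s, ρ₀ s = 1)
    (γ : ℝ) (hγ : 0 < γ) (hγ1 : γ < 1)
    (w : S → A → ℝ) (hw : ∀ s a, 0 < w s a) (hwsum : ∑ s, ∑ a, w s a = 1)
    (μ : ℝ) (hμ : 0 < μ)
    (x' : S → A → ℝ)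
    (Vstar : S → ℝ) (hstar : S → A → ℝ)
    (hstar_nonneg : ∀ s a, 0 ≤ hstar s a)
    (hmin : ∀ (V : S → ℝ) (h : S → A → ℝ), (∀ s a, 0 ≤ h s a) →
      Lmu P r ρ₀ γ μ w Vstar hstar x' ≤ Lmu P r ρ₀ γ μ w V h x') :
    sSup {c : ℝ | ∃ x : S → A → ℝ,
        (∀ s a, 0 ≤ x s a) ∧
        (∀ s' : S, ∑ s, ∑ a,
          ((if s = s' then (1 : ℝ) else 0) - γ * P s a s') * w s a *
            x s a = ρ₀ s') ∧
        c = (∑ s, ∑ a, r s a * w s a * x s a)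
          - (1 / (2 * μ)) * ∑ s, ∑ a, w s a * (x s a - x' s a) ^ 2}
      =
    Lmu P r ρ₀ γ μ w Vstar hstar x'
      - (1 / (2 * μ)) * ∑ s, ∑ a, w s a * (x' s a) ^ 2 := by
  classical
  have hμ' : μ ≠ 0 := ne_of_gt hμ
  set Z : S → A → ℝ := Zmu P r γ μ Vstar hstar x' with hZdef
  -- Step 1: stationarity in V gives feasibility of Z
  have hfeas : ∀ s' : S, ∑ s, ∑ a, ((if s = s' then (1:ℝ) else 0) - γ * P s a s') * w s a * Z s a = ρ₀ s' := by
    intro s'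
    set dV : S → ℝ := fun s => if s = s' then (1:ℝ) else 0 with hdV
    have hsum : ∀ (s : S) (a : A), (∑ s1, P s a s1 * dV s1) = P s a s' := by
      intro s a
      simp [hdV, mul_ite, mul_one, mul_zero, Finset.sum_ite_eq']
    have hρ' : ∑ s, ρ₀ s * dV s = ρ₀ s' := by
      simp [hdV, mul_ite, mul_one, mul_zero, Finset.sum_ite_eq']
    have hC : 0 ≤ (μ/2) * ∑ s, ∑ a, w s a * (γ * P s a s' - dV s) ^ 2 := by
      apply mul_nonneg (by linarith)
      exact Finset.sum_nonneg fun s _ => Finset.sum_nonneg fun a _ =>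
        mul_nonneg (le_of_lt (hw s a)) (sq_nonneg _)
    have hq : ∀ t : ℝ, 0 ≤ (ρ₀ s' + ∑ s, ∑ a, w s a * Z s a * (γ * P s a s' - dV s)) * t
        + ((μ/2) * ∑ s, ∑ a, w s a * (γ * P s a s' - dV s) ^ 2) * t ^ 2 := by
      intro t
      have h1 := hmin (fun s => Vstar s + t * dV s) (fun s a => hstar s a + t * 0)
        (fun s a => by simpa using hstar_nonneg s a)
      rw [L_expand P r ρ₀ γ μ hμ' w Vstar hstar x' t dV (fun _ _ => 0)] at h1
      simp only [hsum, hρ', zero_add, ← hZdef] at h1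
      nlinarith [h1]
    have hD := quad_all _ _ hC hq
    have hconv : ∑ s, ∑ a, ((if s = s' then (1:ℝ) else 0) - γ * P s a s') * w s a * Z s a
        = -∑ s, ∑ a, w s a * Z s a * (γ * P s a s' - dV s) := by
      rw [← Finset.sum_neg_distrib]
      refine Finset.sum_congr rfl fun s _ => ?_
      rw [← Finset.sum_neg_distrib]
      refine Finset.sum_congr rfl fun a _ => ?_
      simp only [hdV]; ring
    rw [hconv]; linarith
  -- Step 2a: Z is nonnegative
  have hZ0 : ∀ s a, 0 ≤ Z s a := by
    intro s₀ a₀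
    set dh : S → A → ℝ := fun s a => (if s = s₀ then (1:ℝ) else 0) * (if a = a₀ then (1:ℝ) else 0) with hdh
    have hdh0 : ∀ s a, 0 ≤ dh s a := by
      intro s a; simp only [hdh]
      apply mul_nonneg <;> split <;> norm_num
    have hE : ∀ (s : S) (a : A), dh s a + γ * (∑ s1, P s a s1 * (0:ℝ)) - 0 = dh s a := by
      intro s a; simp
    have hS1 : ∑ s, ∑ a, w s a * Z s a * dh s a = w s₀ a₀ * Z s₀ a₀ := by
      simp [hdh, mul_ite, ite_mul, mul_one, mul_zero, zero_mul, one_mul,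
        Finset.sum_ite_eq', Finset.sum_ite_eq]
    have hS2 : ∑ s, ∑ a, w s a * (dh s a) ^ 2 = w s₀ a₀ := by
      simp [hdh, mul_ite, ite_mul, mul_one, mul_zero, zero_mul, one_mul, mul_pow,
        Finset.sum_ite_eq', Finset.sum_ite_eq]
    have hq : ∀ t : ℝ, 0 ≤ t → 0 ≤ (w s₀ a₀ * Z s₀ a₀) * t + ((μ/2) * w s₀ a₀) * t ^ 2 := by
      intro t ht
      have h1 := hmin (fun s => Vstar s + t * 0) (fun s a => hstar s a + t * dh s a)
        (fun s a => by simpa using add_nonneg (hstar_nonneg s a) (mul_nonneg ht (hdh0 s a)))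
      rw [L_expand P r ρ₀ γ μ hμ' w Vstar hstar x' t (fun _ => 0) dh] at h1
      simp only [mul_zero, Finset.sum_const_zero, zero_add, add_zero, sub_zero, ← hZdef, hS1, hS2] at h1
      nlinarith [h1]
    have := quad_pos _ _ (mul_nonneg (by linarith) (hw s₀ a₀).le) hq
    nlinarith [hw s₀ a₀]
  -- Step 2b: complementary slackness (sum version)
  have hcs : ∑ s, ∑ a, w s a * Z s a * hstar s a = 0 := by
    have hE : ∀ (s : S) (a : A), hstar s a + γ * (∑ s1, P s a s1 * (0:ℝ)) - 0 = hstar s a := by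
      intro s a; simp
    have hC : 0 ≤ (μ/2) * ∑ s, ∑ a, w s a * (hstar s a) ^ 2 := by
      apply mul_nonneg (by linarith)
      exact Finset.sum_nonneg fun s _ => Finset.sum_nonneg fun a _ =>
        mul_nonneg (le_of_lt (hw s a)) (sq_nonneg _)
    have hq : ∀ t : ℝ, -1 ≤ t → 0 ≤ (∑ s, ∑ a, w s a * Z s a * hstar s a) * t
        + ((μ/2) * ∑ s, ∑ a, w s a * (hstar s a) ^ 2) * t ^ 2 := by
      intro t ht
      have h1 := hmin (fun s => Vstar s + t * 0) (fun s a => hstar s a + t * hstar s a)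
        (fun s a => by show 0 ≤ hstar s a + t * hstar s a; nlinarith [hstar_nonneg s a])
      rw [L_expand P r ρ₀ γ μ hμ' w Vstar hstar x' t (fun _ => 0) hstar] at h1
      simp only [mul_zero, Finset.sum_const_zero, zero_add, add_zero, sub_zero, ← hZdef] at h1
      nlinarith [h1]
    have hle := quad_neg _ _ hC hq
    have hge := quad_pos _ _ hC (fun t ht => hq t (by linarith))
    linarith
  -- Key identity for any feasible x
  have keyid : ∀ x : S → A → ℝ,
      (∀ s' : S, ∑ s, ∑ a, ((if s = s' then (1:ℝ) else 0) - γ * P s a s') * w s a * x s a = ρ₀ s') →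
      (∑ s, ∑ a, r s a * w s a * x s a) - (1 / (2 * μ)) * ∑ s, ∑ a, w s a * (x s a - x' s a) ^ 2
        = (Lmu P r ρ₀ γ μ w Vstar hstar x' - (1 / (2 * μ)) * ∑ s, ∑ a, w s a * (x' s a) ^ 2)
          - ∑ s, ∑ a, w s a * (x s a * hstar s a + (1 / (2 * μ)) * (x s a - Z s a) ^ 2) := by
    intro x hx
    have key : ∑ s, ρ₀ s * Vstar s
        = ∑ s, ∑ a, w s a * x s a * (Vstar s - γ * ∑ s1, P s a s1 * Vstar s1) := by
      calc ∑ s', ρ₀ s' * Vstar s'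
          = ∑ s', (∑ s, ∑ a, ((if s = s' then (1:ℝ) else 0) - γ * P s a s') * w s a * x s a) * Vstar s' :=
            Finset.sum_congr rfl fun s' _ => by rw [hx s']
        _ = ∑ s', ∑ s, ∑ a, ((if s = s' then (1:ℝ) else 0) - γ * P s a s') * w s a * x s a * Vstar s' := by
            simp only [Finset.sum_mul]
        _ = ∑ s, ∑ a, ∑ s', ((if s = s' then (1:ℝ) else 0) - γ * P s a s') * w s a * x s a * Vstar s' := by
            rw [Finset.sum_comm]
            exact Finset.sum_congr rfl fun s _ => Finset.sum_comm
        _ = ∑ s, ∑ a, w s a * x s a * (Vstar s - γ * ∑ s1, P s a s1 * Vstar s1) := by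
            refine Finset.sum_congr rfl fun s _ => Finset.sum_congr rfl fun a _ => ?_
            have hpt : ∀ s' : S, ((if s = s' then (1:ℝ) else 0) - γ * P s a s') * w s a * x s a * Vstar s'
                = (if s = s' then w s a * x s a * Vstar s' else 0)
                  - γ * (w s a * x s a) * (P s a s' * Vstar s') := by
              intro s'; split <;> ring
            rw [Finset.sum_congr rfl fun s' _ => hpt s', Finset.sum_sub_distrib,
              Finset.sum_ite_eq, ← Finset.mul_sum]
            simp only [Finset.mem_univ, if_true]
            ring
    simp only [Lmu, ← hZdef, key]
    have hpt2 : ∀ (s : S) (a : A),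
        r s a * w s a * x s a - (1 / (2 * μ)) * (w s a * (x s a - x' s a) ^ 2)
          = (w s a * x s a * (Vstar s - γ * ∑ s1, P s a s1 * Vstar s1)
              + (1 / (2 * μ)) * (w s a * (Z s a) ^ 2))
            - (1 / (2 * μ)) * (w s a * (x' s a) ^ 2)
            - w s a * (x s a * hstar s a + (1 / (2 * μ)) * (x s a - Z s a) ^ 2) := by
      intro s a
      simp only [hZdef, Zmu]
      field_simp
      ring
    calc (∑ s, ∑ a, r s a * w s a * x s a) - (1 / (2 * μ)) * ∑ s, ∑ a, w s a * (x s a - x' s a) ^ 2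
        = ∑ s, ∑ a, (r s a * w s a * x s a - (1 / (2 * μ)) * (w s a * (x s a - x' s a) ^ 2)) := by
          simp only [Finset.mul_sum, Finset.sum_sub_distrib]
      _ = ∑ s, ∑ a, ((w s a * x s a * (Vstar s - γ * ∑ s1, P s a s1 * Vstar s1)
              + (1 / (2 * μ)) * (w s a * (Z s a) ^ 2))
            - (1 / (2 * μ)) * (w s a * (x' s a) ^ 2)
            - w s a * (x s a * hstar s a + (1 / (2 * μ)) * (x s a - Z s a) ^ 2)) :=
          Finset.sum_congr rfl fun s _ => Finset.sum_congr rfl fun a _ => hpt2 s a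
      _ = _ := by
          simp only [Finset.mul_sum, Finset.sum_sub_distrib, Finset.sum_add_distrib]
  -- Conclusion via IsGreatest
  apply IsGreatest.csSup_eq
  constructor
  · refine ⟨Z, hZ0, hfeas, ?_⟩
    rw [keyid Z hfeas]
    have : ∑ s, ∑ a, w s a * (Z s a * hstar s a + (1 / (2 * μ)) * (Z s a - Z s a) ^ 2)
        = ∑ s, ∑ a, w s a * Z s a * hstar s a := by
      refine Finset.sum_congr rfl fun s _ => Finset.sum_congr rfl fun a _ => by ring
    rw [this, hcs]
    ring
  · rintro c ⟨x, hx0, hxc, rfl⟩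
    rw [keyid x hxc]
    have hpen : 0 ≤ ∑ s, ∑ a, w s a * (x s a * hstar s a + (1 / (2 * μ)) * (x s a - Z s a) ^ 2) := by
      refine Finset.sum_nonneg fun s _ => Finset.sum_nonneg fun a _ => ?_
      apply mul_nonneg (le_of_lt (hw s a))
      apply add_nonneg (mul_nonneg (hx0 s a) (hstar_nonneg s a))
      positivity
    linarith
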